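/- Let r ≥ 2 be an integer and let k ≥ 0. Then there are infinitely many positive integers n such that h(n) ≥ k, r divides n, and every prime factor of n is a prime factor of r. -/

import Mathlib

/-- Number of digits of `n` in base `B`. -/
def dig (B n : ℕ) : ℕ := (Nat.digits B n).length

lemma dig_eq {B n : ℕ} (hB : 2 ≤ B) (hn : n ≠ 0) : dig B n = Nat.log B n + 1 :=
  Nat.digits_len B n hB hn

lemma dig_mono {B : ℕ} (hB : 2 ≤ B) {m n : ℕ} (h : m ≤ n) : dig B m ≤ dig B n := by
  rcases Nat.eq_zero_or_pos m with rfl | hm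
  · simp [dig]
  · rw [dig_eq hB hm.ne', dig_eq hB (by omega)]
    exact Nat.add_le_add_right (Nat.log_mono_right h) 1

lemma dig_mul_le {B a b : ℕ} (hB : 2 ≤ B) (ha : a ≠ 0) (hb : b ≠ 0) :
    dig B (a * b) ≤ dig B a + dig B b := by
  have hab : a * b ≠ 0 := Nat.mul_ne_zero ha hb
  rw [dig_eq hB ha, dig_eq hB hb, dig_eq hB hab]
  have h1 : a < B ^ (Nat.log B a + 1) := Nat.lt_pow_succ_log_self (by omega) a
  have h2 : b < B ^ (Nat.log B b + 1) := Nat.lt_pow_succ_log_self (by omega) b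
  have h3 : a * b < B ^ (Nat.log B a + 1 + (Nat.log B b + 1)) := by
    rw [pow_add]; exact Nat.mul_lt_mul'' h1 h2
  have := Nat.log_lt_of_lt_pow hab h3
  omega

lemma sq_le_two_pow : ∀ M, 4 ≤ M → M * M ≤ 2 ^ M := by
  intro M hM
  induction M with
  | zero => omega
  | succ n ih =>
    rcases Nat.lt_or_ge n 4 with h | h
    · interval_cases n <;> revert hM <;> decide
    · have h1 := ih (by omega)
      have h2 : 2 * n + 1 ≤ n * n := by nlinarith
      rw [pow_succ]; nlinarith

/-- Number of digits needed to write the prime power factorisation of `n` in base `B`. -/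
def phi (B n : ℕ) : ℕ :=
  ∑ p ∈ n.factorization.support,
    (dig B p + if n.factorization p = 1 then 0 else dig B (n.factorization p))

/-- `h B n = δ(n) - φ(n)` as an integer. -/
def hEcon (B n : ℕ) : ℤ := (dig B n : ℤ) - (phi B n : ℤ)

theorem statement_11 (B : ℕ) (hB : 2 ≤ B) (r : ℕ) (hr : 2 ≤ r) (k : ℕ) :
    {n : ℕ | 0 < n ∧ (k : ℤ) ≤ hEcon B n ∧ r ∣ n ∧
      ∀ p : ℕ, p.Prime → p ∣ n → p ∣ r}.Infinite := by
  have hB1 : 1 < B := hB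
  set c := Nat.clog 2 B with hc
  have hc1 : 1 ≤ c := Nat.clog_pos one_lt_two hB
  have hBc : B ≤ 2 ^ c := Nat.le_pow_clog one_lt_two B
  set C0 := (r + 1) * (2 * dig B r + dig B c + 1) with hC0
  set M0 := max 4 (k + C0 + (r + 1) + 1) with hM0
  refine Set.infinite_of_injective_forall_mem
    (f := fun t : ℕ => r ^ (c * B ^ (M0 + t))) ?_ ?_
  · have hsm : StrictMono fun t : ℕ => r ^ (c * B ^ (M0 + t)) := by
      intro s t hst
      exact Nat.pow_lt_pow_right hr
        (Nat.mul_lt_mul_of_pos_left (Nat.pow_lt_pow_right hB1 (by omega)) (by omega))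
    exact hsm.injective
  · intro t
    simp only [Set.mem_setOf_eq]
    set M := M0 + t with hMdef
    have hM4 : 4 ≤ M := by have h := le_max_left 4 (k + C0 + (r + 1) + 1); omega
    have hM2 : k + C0 + (r + 1) + 1 ≤ M := by have h := le_max_right 4 (k + C0 + (r + 1) + 1); omega
    set a := c * B ^ M with hadef
    have hBM : B ^ M ≠ 0 := by positivity
    have ha : a ≠ 0 := by
      simp only [hadef]
      exact Nat.mul_ne_zero (by omega) hBM
    set n := r ^ a with hndef
    have hn0 : n ≠ 0 := by positivity
    -- lower bound on dig B n
    have hlow : B ^ (B ^ M) ≤ n := by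
      calc B ^ (B ^ M) ≤ (2 ^ c) ^ (B ^ M) := Nat.pow_le_pow_left hBc _
        _ = 2 ^ (c * B ^ M) := by rw [← pow_mul]
        _ ≤ r ^ (c * B ^ M) := Nat.pow_le_pow_left hr _
    have hdig : B ^ M + 1 ≤ dig B n := by
      have := (Nat.le_log_iff_pow_le hB1 hn0).mpr hlow
      rw [dig_eq hB hn0]; omega
    -- upper bound on phi B n
    have hsupp : n.factorization.support = r.primeFactors := by
      rw [hndef, Nat.support_factorization, Nat.primeFactors_pow r ha]
    have hterm : ∀ p ∈ r.primeFactors,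
        dig B p + (if n.factorization p = 1 then 0 else dig B (n.factorization p))
          ≤ 2 * dig B r + dig B c + 1 + M := by
      intro p hp
      have hpr : p ∣ r := Nat.dvd_of_mem_primeFactors hp
      have hple : p ≤ r := Nat.le_of_dvd (by omega) hpr
      have h1 : dig B p ≤ dig B r := dig_mono hB hple
      have hfe : n.factorization p = a * r.factorization p := by
        rw [hndef, Nat.factorization_pow]; simp
      have he : r.factorization p ≤ r := le_of_lt (Nat.factorization_lt p (by omega))
      have h2 : dig B (n.factorization p) ≤ dig B (a * r) := by
        rw [hfe]; exact dig_mono hB (Nat.mul_le_mul (le_refl a) he)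
      have h3 : dig B (a * r) ≤ dig B a + dig B r := dig_mul_le hB ha (by omega)
      have h4 : dig B a ≤ dig B c + (M + 1) := by
        have h5 := dig_mul_le hB (by omega : c ≠ 0) hBM
        have hd : dig B (B ^ M) = M + 1 := by
          rw [dig_eq hB hBM, Nat.log_pow hB1]
        rw [hadef]; omega
      split <;> omega
    have hcard : r.primeFactors.card ≤ r + 1 := by
      have hsub : r.primeFactors ⊆ Finset.range (r + 1) := by
        intro p hp
        exact Finset.mem_range.mpr
          (by have := Nat.le_of_dvd (by omega) (Nat.dvd_of_mem_primeFactors hp); omega)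
      calc r.primeFactors.card ≤ (Finset.range (r + 1)).card := Finset.card_le_card hsub
        _ = r + 1 := Finset.card_range _
    have hphi : phi B n ≤ C0 + (r + 1) * M := by
      unfold phi
      rw [hsupp]
      calc ∑ p ∈ r.primeFactors,
            (dig B p + if n.factorization p = 1 then 0 else dig B (n.factorization p))
          ≤ r.primeFactors.card • (2 * dig B r + dig B c + 1 + M) :=
            Finset.sum_le_card_nsmul _ _ _ hterm
        _ = r.primeFactors.card * (2 * dig B r + dig B c + 1 + M) := by rw [smul_eq_mul]
        _ ≤ (r + 1) * (2 * dig B r + dig B c + 1 + M) :=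
            Nat.mul_le_mul hcard (le_refl _)
        _ = C0 + (r + 1) * M := by rw [hC0]; ring
    -- growth estimate
    have hgrow : k + C0 + (r + 1) * M ≤ B ^ M := by
      have g1 : M * M ≤ 2 ^ M := sq_le_two_pow M hM4
      have g2 : (2 : ℕ) ^ M ≤ B ^ M := Nat.pow_le_pow_left hB M
      have g3 : (k + C0 + (r + 1) + 1) * M ≤ M * M :=
        Nat.mul_le_mul hM2 (le_refl M)
      nlinarith
    have key : k + phi B n ≤ dig B n := by omega
    refine ⟨by positivity, ?_, dvd_pow_self r ha, fun p hp hpn => hp.dvd_of_dvd_pow hpn⟩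
    unfold hEcon
    omega
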